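/- Let n ≥ 3 and let F be a family of subsets of {1,...,n} containing ∅ and [n], with no four distinct members A, B, C, D satisfying A ∪ B ⊆ C ∩ D. Then F − {∅, [n]} is an antichain, and consequently |F| ≤ C(n, ⌊n/2⌋) + 2. -/

import Mathlib

theorem stmt_18 (n : ℕ) (hn : 3 ≤ n) (F : Finset (Finset (Fin n)))
    (hempty : ∅ ∈ F) (hfull : (Finset.univ : Finset (Fin n)) ∈ F)
    (hstar : ∀ A ∈ F, ∀ B ∈ F, ∀ C ∈ F, ∀ D ∈ F,
      A ≠ B → A ≠ C → A ≠ D → B ≠ C → B ≠ D → C ≠ D → ¬ (A ∪ B ⊆ C ∩ D)) :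
    IsAntichain (· ⊆ ·)
      ((F \ {∅, (Finset.univ : Finset (Fin n))} : Finset (Finset (Fin n))) :
        Set (Finset (Fin n)))
      ∧ F.card ≤ n.choose (n / 2) + 2 := by
  have huniv_ne : (∅ : Finset (Fin n)) ≠ Finset.univ := by
    intro h
    have : (⟨0, by omega⟩ : Fin n) ∈ (Finset.univ : Finset (Fin n)) := Finset.mem_univ _
    rw [← h] at this; exact absurd this (Finset.notMem_empty _)
  have hanti : IsAntichain (· ⊆ ·)
      ((F \ {∅, (Finset.univ : Finset (Fin n))} : Finset (Finset (Fin n))) :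
        Set (Finset (Fin n))) := by
    intro A hA B hB hAB hsub
    simp only [Finset.coe_sdiff, Set.mem_diff, Finset.mem_coe, Finset.coe_insert,
      Finset.coe_singleton, Set.mem_insert_iff, Set.mem_singleton_iff, not_or] at hA hB
    obtain ⟨hAF, hA0, hAu⟩ := hA
    obtain ⟨hBF, hB0, hBu⟩ := hB
    exact hstar ∅ hempty A hAF B hBF Finset.univ hfull
      (Ne.symm hA0) (Ne.symm hB0) huniv_ne hAB hAu hBu
      (by simp [Finset.union_subset_iff]; exact hsub)
  refine ⟨hanti, ?_⟩
  have hcard : (F \ {∅, (Finset.univ : Finset (Fin n))}).card ≤ n.choose (n / 2) := by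
    have := IsAntichain.sperner hanti
    simpa using this
  have hsub : F ⊆ (F \ {∅, (Finset.univ : Finset (Fin n))}) ∪ {∅, Finset.univ} := by
    intro X hX
    by_cases h : X ∈ ({∅, (Finset.univ : Finset (Fin n))} : Finset (Finset (Fin n)))
    · exact Finset.mem_union_right _ h
    · exact Finset.mem_union_left _ (Finset.mem_sdiff.mpr ⟨hX, h⟩)
  calc F.card ≤ ((F \ {∅, (Finset.univ : Finset (Fin n))}) ∪ {∅, Finset.univ}).card :=
        Finset.card_le_card hsub
    _ ≤ (F \ {∅, (Finset.univ : Finset (Fin n))}).card + ({∅, (Finset.univ : Finset (Fin n))} : Finset (Finset (Fin n))).card :=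
        Finset.card_union_le _ _
    _ ≤ n.choose (n / 2) + 2 := by
        have : ({∅, (Finset.univ : Finset (Fin n))} : Finset (Finset (Fin n))).card ≤ 2 :=
          Finset.card_insert_le _ _ |>.trans (by simp)
        omega
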